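/- Suppose in addition that T ≥ n and that there is a set E of at most K 'special' episodes such that every non-final episode not in E ends because the count of some element reached its past count, i.e., for every k ∈ {1, …, m−1} with k ∉ E there exists x ∈ X such that ν_k(x) = max(1, N_k(x)). Then the number of episodes satisfies m ≤ 1 + 2n + n·log₂(T/n) + K. -/

import Mathlib

/-- Suppose in addition that `T ≥ n` and that there is a set `E` of at
most `K` 'special' episodes such that every non-final episode not in `E` ends because
the count of some element reached its past count, i.e., for every
`k ∈ {1, …, m−1}` with `k ∉ E` there exists `y ∈ X` with `ν_k(y) = max 1 (N_k(y))`.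
Then the number of episodes satisfies `m ≤ 1 + 2n + n·log₂(T/n) + K`. -/
theorem number_of_episodes_bound
    {X : Type*} [Fintype X] [DecidableEq X]
    (n : ℕ) (hn : n = Fintype.card X) (hn1 : 1 ≤ n)
    (T m : ℕ) (hT : 1 ≤ T) (hm : 1 ≤ m)
    (x : ℕ → X) (t : ℕ → ℕ)
    (ht1 : t 1 = 1)
    (htmono : ∀ k, 1 ≤ k → k < m → t k < t (k + 1))
    (htm : t m ≤ T) (htm1 : t (m + 1) = T + 1)
    (N ν : ℕ → X → ℕ)
    (hN : ∀ k y, N k y = ((Finset.Ico 1 (t k)).filter (fun s => x s = y)).card)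
    (hν : ∀ k y, ν k y = ((Finset.Ico (t k) (t (k + 1))).filter (fun s => x s = y)).card)
    (hstop : ∀ k y, 1 ≤ k → k ≤ m → ν k y ≤ max 1 (N k y))
    (hTn : n ≤ T)
    (E : Finset ℕ) (K : ℕ) (hE : E.card ≤ K)
    (hdouble : ∀ k, 1 ≤ k → k ≤ m - 1 → k ∉ E → ∃ y : X, ν k y = max 1 (N k y)) :
    (m : ℝ) ≤ 1 + 2 * n + n * Real.logb 2 ((T : ℝ) / n) + K := by
  classical
  have hneX : Nonempty X := by
    rw [← Fintype.card_pos_iff, ← hn]; omega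
  -- step monotonicity of t on [1, m]
  have hstep : ∀ k, 1 ≤ k → k ≤ m → t k < t (k + 1) := by
    intro k hk1 hkm
    rcases eq_or_lt_of_le hkm with rfl | h
    · rw [htm1]; omega
    · exact htmono k hk1 h
  -- monotonicity of t
  have tmono : ∀ k l, 1 ≤ k → k ≤ l → l ≤ m + 1 → t k ≤ t l := by
    intro k l hk1 hkl hlm
    induction l with
    | zero => omega
    | succ l ih =>
      rcases eq_or_lt_of_le hkl with h | h
      · rw [h]
      · exact le_trans (ih (by omega) (by omega)) (le_of_lt (hstep l (by omega) (by omega)))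
  have h1t : ∀ k, 1 ≤ k → k ≤ m + 1 → 1 ≤ t k := by
    intro k hk1 hkm
    calc 1 = t 1 := ht1.symm
    _ ≤ t k := tmono 1 k le_rfl hk1 hkm
  -- additivity of N
  have hNsum : ∀ k y, 1 ≤ k → k ≤ m → N (k + 1) y = N k y + ν k y := by
    intro k y hk1 hkm
    rw [hN, hN, hν]
    have h1 : 1 ≤ t k := h1t k hk1 (by omega)
    have h2 : t k ≤ t (k + 1) := le_of_lt (hstep k hk1 hkm)
    rw [← Finset.card_union_of_disjoint
        (Finset.disjoint_filter_filter (Finset.Ico_disjoint_Ico_consecutive 1 (t k) (t (k+1)))),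
      ← Finset.filter_union, Finset.Ico_union_Ico_eq_Ico h1 h2]
  -- monotonicity of N
  have hNmono : ∀ k l y, 1 ≤ k → k ≤ l → l ≤ m + 1 → N k y ≤ N l y := by
    intro k l y hk1 hkl hlm
    rw [hN, hN]
    exact Finset.card_le_card (Finset.filter_subset_filter _
      (Finset.Ico_subset_Ico le_rfl (tmono k l hk1 hkl hlm)))
  -- total counts
  set c : X → ℕ := fun y => N (m + 1) y with hc
  have hcsum : ∑ y : X, c y = T := by
    have : ∀ y : X, c y = ((Finset.Ico 1 (T + 1)).filter (fun s => x s = y)).card := by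
      intro y; rw [hc]; simp only [hN, htm1]
    rw [Finset.sum_congr rfl (fun y _ => this y),
      ← Finset.card_eq_sum_card_fiberwise (fun s _ => Finset.mem_univ (x s))]
    simp
  -- the trigger choice function
  set f : ℕ → X := fun k =>
    if h : 1 ≤ k ∧ k ≤ m - 1 ∧ k ∉ E then (hdouble k h.1 h.2.1 h.2.2).choose
    else hneX.some with hfdef
  set D : Finset ℕ := (Finset.Ico 1 m).filter (fun k => k ∉ E) with hD
  have hfD : ∀ k ∈ D, ν k (f k) = max 1 (N k (f k)) := by
    intro k hk
    rw [hD, Finset.mem_filter, Finset.mem_Ico] at hk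
    have h : 1 ≤ k ∧ k ≤ m - 1 ∧ k ∉ E := by
      refine ⟨hk.1.1, by omega, hk.2⟩
    rw [hfdef]
    simp only [dif_pos h]
    exact (hdouble k h.1 h.2.1 h.2.2).choose_spec
  -- key doubling claim
  have claimB : ∀ r : ℕ, ∀ s : Finset ℕ, s.card = r → ∀ y : X,
      (∀ j ∈ s, j ∈ D ∧ f j = y) → ∀ b, 1 ≤ b → b ≤ m + 1 → (∀ j ∈ s, j < b) →
      2 ^ s.card ≤ N b y + max 1 (N b y) := by
    intro r
    induction r with
    | zero =>
      intro s hs y _ b _ _ _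
      rw [hs, pow_zero]
      omega
    | succ r ih =>
      intro s hs y hsy b hb1 hbm hsb
      have hsne : s.Nonempty := by
        rw [← Finset.card_pos, hs]; omega
      set k := s.max' hsne with hk
      have hks : k ∈ s := s.max'_mem hsne
      obtain ⟨hkD, hkf⟩ := hsy k hks
      have hkIco : 1 ≤ k ∧ k < m := by
        have := hkD; rw [hD, Finset.mem_filter, Finset.mem_Ico] at this; exact ⟨this.1.1, this.1.2⟩
      have hkb : k < b := hsb k hks
      have herase : (s.erase k).card = r := by
        rw [Finset.card_erase_of_mem hks, hs]
        omega
      have hIH : 2 ^ r ≤ N k y + max 1 (N k y) := by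
        have h := ih (s.erase k) herase y (fun j hj => hsy j (Finset.mem_of_mem_erase hj))
          k hkIco.1 (by omega) (by
            intro j hj
            have hjk : j ≤ k := s.le_max' j (Finset.mem_of_mem_erase hj)
            have := Finset.ne_of_mem_erase hj
            omega)
        rwa [herase] at h
      -- at the trigger k, the count doubles
      have htrig : N (k + 1) y = N k y + max 1 (N k y) := by
        rw [hNsum k y hkIco.1 (by omega), ← hkf, hfD k hkD, hkf]
      have hpos : 1 ≤ N (k + 1) y := by rw [htrig]; omega
      have hmono : N (k + 1) y ≤ N b y := hNmono (k + 1) b y (by omega) (by omega) hbm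
      have hb1' : 1 ≤ N b y := le_trans hpos hmono
      have : 2 ^ (r + 1) ≤ 2 * N (k + 1) y := by
        rw [pow_succ, htrig]
        omega
      rw [hs]
      have hmaxb : max 1 (N b y) = N b y := max_eq_right hb1'
      omega
  -- fiber decomposition of D
  have hDcard : D.card = ∑ y : X, (D.filter (fun k => f k = y)).card :=
    Finset.card_eq_sum_card_fiberwise (fun k _ => Finset.mem_univ (f k))
  -- per-fiber bound in ℕ
  set z : X → ℕ := fun y => max 1 (c y) with hz
  have hfiber : ∀ y : X, 2 ^ (D.filter (fun k => f k = y)).card ≤ 2 * z y := by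
    intro y
    have := claimB (D.filter (fun k => f k = y)).card (D.filter (fun k => f k = y)) rfl y
      (fun j hj => by
        rw [Finset.mem_filter] at hj; exact hj)
      (m + 1) (by omega) le_rfl
      (fun j hj => by
        rw [Finset.mem_filter, hD, Finset.mem_filter, Finset.mem_Ico] at hj
        omega)
    have hzy : z y = max 1 (N (m + 1) y) := rfl
    rw [hzy]
    omega
  -- m ≤ 1 + D.card + K in ℕ
  have hmD : m ≤ 1 + D.card + K := by
    have hsplit := Finset.card_filter_add_card_filter_not
      (s := Finset.Ico 1 m) (p := fun k => k ∉ E)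
    have hsub : ((Finset.Ico 1 m).filter (fun k => ¬ k ∉ E)).card ≤ E.card := by
      refine Finset.card_le_card ?_
      intro k hk
      rw [Finset.mem_filter] at hk
      exact not_not.mp hk.2
    have hIcoCard : (Finset.Ico 1 m).card = m - 1 := by
      rw [Nat.card_Ico]
    rw [hD]
    omega
  -- now to the reals
  have h2 : (1 : ℝ) < 2 := one_lt_two
  have hzpos : ∀ y : X, (0 : ℝ) < z y := by
    intro y
    have : 1 ≤ z y := le_max_left _ _
    exact_mod_cast Nat.lt_of_lt_of_le Nat.zero_lt_one this
  -- per fiber bound in ℝ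
  have hfiberR : ∀ y : X, ((D.filter (fun k => f k = y)).card : ℝ) ≤ 1 + Real.logb 2 (z y) := by
    intro y
    set r := (D.filter (fun k => f k = y)).card
    have h1 : ((2 : ℝ)) ^ r ≤ 2 * z y := by exact_mod_cast hfiber y
    have h2r : (r : ℝ) = Real.logb 2 ((2 : ℝ) ^ r) := by
      rw [Real.logb_pow, Real.logb_self_eq_one one_lt_two]
      ring
    calc (r : ℝ) = Real.logb 2 ((2 : ℝ) ^ r) := h2r
      _ ≤ Real.logb 2 (2 * z y) :=
        Real.logb_le_logb_of_le h2 (by positivity) h1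
      _ = 1 + Real.logb 2 (z y) := by
        rw [Real.logb_mul (by norm_num) (ne_of_gt (hzpos y)),
          Real.logb_self_eq_one one_lt_two]
  -- Jensen: sum of logs
  have hnR : (0 : ℝ) < n := by exact_mod_cast hn1
  have hjensen : ∑ y : X, Real.log (z y) ≤ n * Real.log ((∑ y : X, (z y : ℝ)) / n) := by
    have hcard : (Fintype.card X : ℝ) = n := by exact_mod_cast hn.symm
    have := strictConcaveOn_log_Ioi.concaveOn.le_map_sum
      (t := Finset.univ) (w := fun _ : X => 1 / (n : ℝ)) (p := fun y : X => (z y : ℝ))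
      (fun _ _ => by positivity)
      (by
        rw [Finset.sum_const, Finset.card_univ, nsmul_eq_mul, hcard]
        field_simp)
      (fun y _ => hzpos y)
    simp only [smul_eq_mul] at this
    rw [← Finset.mul_sum] at this
    have h1n : (0 : ℝ) < 1 / n := by positivity
    calc ∑ y : X, Real.log (z y)
        = n * ((1 / n) * ∑ y : X, Real.log (z y)) := by field_simp
      _ ≤ n * Real.log ((1 / n) * ∑ y : X, (z y : ℝ)) := by
          rw [Finset.mul_sum] at this ⊢
          exact mul_le_mul_of_nonneg_left (by rw [Finset.mul_sum]; exact this) (le_of_lt hnR)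
      _ = n * Real.log ((∑ y : X, (z y : ℝ)) / n) := by rw [one_div, inv_mul_eq_div]
  -- sum of z is at most 2T
  have hzsum : ∑ y : X, (z y : ℝ) ≤ 2 * T := by
    have h1 : ∑ y : X, z y ≤ ∑ y : X, (1 + c y) := by
      refine Finset.sum_le_sum (fun y _ => ?_)
      have : z y = max 1 (c y) := rfl
      omega
    have h2' : ∑ y : X, (1 + c y) = n + T := by
      rw [Finset.sum_add_distrib, hcsum, Finset.sum_const, Finset.card_univ, smul_eq_mul,
        mul_one, hn]
    have : ∑ y : X, z y ≤ 2 * T := by omega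
    exact_mod_cast this
  -- putting together the sum-of-logb bound
  have hlog2pos : (0 : ℝ) < Real.log 2 := Real.log_pos h2
  have hsumlogb : ∑ y : X, Real.logb 2 (z y) ≤ n + n * Real.logb 2 ((T : ℝ) / n) := by
    have hTpos : (0 : ℝ) < T := by exact_mod_cast hT
    have hzsumpos : (0 : ℝ) < (∑ y : X, (z y : ℝ)) / n := by
      have : (0 : ℝ) < ∑ y : X, (z y : ℝ) :=
        Finset.sum_pos (fun y _ => hzpos y) (Finset.univ_nonempty_iff.mpr hneX)
      exact div_pos this hnR
    have step1 : ∑ y : X, Real.logb 2 (z y) ≤ n * Real.logb 2 ((∑ y : X, (z y : ℝ)) / n) := by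
      simp only [Real.logb, ← Finset.sum_div]
      rw [div_le_iff₀ hlog2pos] at *
      calc ∑ y : X, Real.log (z y) ≤ n * Real.log ((∑ y : X, (z y : ℝ)) / n) := hjensen
        _ = n * (Real.log ((∑ y : X, (z y : ℝ)) / n) / Real.log 2) * Real.log 2 := by
            field_simp
    have step2 : Real.logb 2 ((∑ y : X, (z y : ℝ)) / n) ≤ Real.logb 2 (2 * T / n) := by
      refine Real.logb_le_logb_of_le h2 hzsumpos ?_
      gcongr
    have step3 : Real.logb 2 (2 * T / n) = 1 + Real.logb 2 ((T : ℝ) / n) := by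
      rw [mul_div_assoc, Real.logb_mul (by norm_num) (by positivity),
        Real.logb_self_eq_one one_lt_two]
    have hmul : (n : ℝ) * Real.logb 2 ((∑ y : X, (z y : ℝ)) / n) ≤
        n * (1 + Real.logb 2 ((T : ℝ) / n)) := by
      rw [← step3]
      exact mul_le_mul_of_nonneg_left (step2) (le_of_lt hnR)
    nlinarith [step1, hmul]
  -- final assembly
  have hDR : (D.card : ℝ) ≤ 2 * n + n * Real.logb 2 ((T : ℝ) / n) := by
    have h1 : (D.card : ℝ) = ∑ y : X, ((D.filter (fun k => f k = y)).card : ℝ) := by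
      rw [hDcard]; push_cast; ring
    calc (D.card : ℝ) = ∑ y : X, ((D.filter (fun k => f k = y)).card : ℝ) := h1
      _ ≤ ∑ y : X, (1 + Real.logb 2 (z y)) := Finset.sum_le_sum (fun y _ => hfiberR y)
      _ = n + ∑ y : X, Real.logb 2 (z y) := by
          rw [Finset.sum_add_distrib, Finset.sum_const, Finset.card_univ, nsmul_eq_mul,
            mul_one, hn]
      _ ≤ n + (n + n * Real.logb 2 ((T : ℝ) / n)) := by linarith [hsumlogb]
      _ = 2 * n + n * Real.logb 2 ((T : ℝ) / n) := by ring
  have hmR : (m : ℝ) ≤ 1 + (D.card : ℝ) + K := by exact_mod_cast hmD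
  linarith
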